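/- Let N ≥ 2 be an integer, q ∈ ℂ nonzero and not a root of unity (so in particular Q = q − q⁻¹ ≠ 0), and α, β ∈ ℂ with α ≠ 0 and α + 𝔰β ≠ 0. Then there exists a unique tuple (λ₁,…,λ₆) ∈ ℂ⁶ satisfying the five conditions: (T) Qλ₃ = Qλ₄ = Q − q^{2N+1}λ₅ + λ₆; (M1) λ₄ = 0; (M2) λ₅ + q^{−2N−1}λ₆ = 0; (M3) (α + 𝔰β)λ₁ + βλ₂ + (q^{2N+1}Q²α + q^{2N}Qβ)λ₆ = 0; (M4) αλ₂ + (α + 𝔰β)λ₃ + (−q^{2N+1}Qα + β)λ₅ + (Qα + q⁻¹β)λ₆ = 0. The unique solution is λ₁ = q^{2N+1}Q³/2 − Q²β/(2α), λ₂ = Q²(2α + 𝔰β)/(2α), λ₃ = λ₄ = 0, λ₅ = q^{−2N−1}Q/2, λ₆ = −Q/2. -/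
import Mathlib

open scoped BigOperators

namespace Stmt7

noncomputable def sconst (N : ℕ) (q : ℂ) : ℂ := ∑ i : Fin N, q ^ (-(2 * ((i.1 : ℤ) + 1)))

lemma zpow_neg_nat (q : ℂ) (m : ℕ) : q ^ (-(m : ℤ)) = (q ^ m)⁻¹ := by
  rw [zpow_neg, zpow_natCast]

lemma sconst_mul (N : ℕ) (q : ℂ) (hq0 : q ≠ 0) :
    (q - q⁻¹) * sconst N q = q⁻¹ - (q ^ (2 * N + 1))⁻¹ := by
  induction N with
  | zero => simp [sconst]
  | succ n ih =>
      have hstep : sconst (n + 1) q = sconst n q + q ^ (-(2 * ((n : ℤ) + 1))) := by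
        rw [sconst, Fin.sum_univ_castSucc]
        simp [sconst]
      have h2 : q ^ (-(2 * ((n : ℤ) + 1))) = (q ^ (2 * n + 2))⁻¹ := by
        have : -(2 * ((n : ℤ) + 1)) = -((2 * n + 2 : ℕ) : ℤ) := by push_cast; ring
        rw [this, zpow_neg_nat]
      rw [hstep, h2, mul_add, ih]
      have h1 : q ^ (2 * n + 1) ≠ 0 := pow_ne_zero _ hq0
      have h3 : q ^ (2 * n + 2) ≠ 0 := pow_ne_zero _ hq0
      have h4 : q ^ (2 * (n + 1) + 1) ≠ 0 := pow_ne_zero _ hq0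
      field_simp
      ring

theorem levi_civita_system_minus (N : ℕ) (hN : 2 ≤ N) (q : ℂ) (hq0 : q ≠ 0)
    (hq : ∀ n : ℕ, 0 < n → q ^ n ≠ 1) (α β : ℂ) (hα : α ≠ 0)
    (hαβ : α + sconst N q * β ≠ 0) :
    ∀ l : Fin 6 → ℂ,
      ((q - q⁻¹) * l 2 = (q - q⁻¹) * l 3 ∧
        (q - q⁻¹) * l 3 = (q - q⁻¹) - q ^ (2 * N + 1) * l 4 + l 5 ∧
        l 3 = 0 ∧
        l 4 + q ^ (-(2 * (N : ℤ) + 1)) * l 5 = 0 ∧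
        (α + sconst N q * β) * l 0 + β * l 1 +
          (q ^ (2 * N + 1) * (q - q⁻¹) ^ 2 * α + q ^ (2 * N) * (q - q⁻¹) * β) * l 5 = 0 ∧
        α * l 1 + (α + sconst N q * β) * l 2 +
          (-(q ^ (2 * N + 1)) * (q - q⁻¹) * α + β) * l 4 +
          ((q - q⁻¹) * α + q⁻¹ * β) * l 5 = 0) ↔
      l = ![q ^ (2 * N + 1) * (q - q⁻¹) ^ 3 / 2 - (q - q⁻¹) ^ 2 * β / (2 * α),
            (q - q⁻¹) ^ 2 * (2 * α + sconst N q * β) / (2 * α),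
            0,
            0,
            q ^ (-(2 * (N : ℤ) + 1)) * (q - q⁻¹) / 2,
            -(q - q⁻¹) / 2] := by
  intro l
  have hP : q ^ (2 * N + 1) ≠ 0 := pow_ne_zero _ hq0
  have hPz : q ^ (-(2 * (N : ℤ) + 1)) = (q ^ (2 * N + 1))⁻¹ := by
    have : -(2 * (N : ℤ) + 1) = -((2 * N + 1 : ℕ) : ℤ) := by push_cast; ring
    rw [this, zpow_neg_nat]
  have hQ : q - q⁻¹ ≠ 0 := by
    intro h
    apply hq 2 (by norm_num)
    have := sub_eq_zero.mp h
    field_simp at this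
    linear_combination this
  have hqq : q * q⁻¹ = 1 := mul_inv_cancel₀ hq0
  have hPP : q ^ (2 * N + 1) * (q ^ (2 * N + 1))⁻¹ = 1 := mul_inv_cancel₀ hP
  have hαα : α * α⁻¹ = 1 := mul_inv_cancel₀ hα
  have hss : (q - q⁻¹) * sconst N q = q⁻¹ - (q ^ (2 * N + 1))⁻¹ := sconst_mul N q hq0
  constructor
  · rintro ⟨e1, e2, e3, e4, e5, e6⟩
    rw [hPz] at e4
    have h2 : l 2 = 0 := mul_left_cancel₀ hQ (by linear_combination e1 + (q - q⁻¹) * e3)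
    have h5 : l 5 = -(q - q⁻¹) / 2 := by
      rw [e3] at e2
      linear_combination (-(1 : ℂ)/2) * e2 + (q ^ (2 * N + 1)/2) * e4 + (-(l 5)/2) * hPP
    have h4 : l 4 = q ^ (-(2 * (N : ℤ) + 1)) * (q - q⁻¹) / 2 := by
      rw [hPz]
      linear_combination e4 - (q ^ (2 * N + 1))⁻¹ * h5
    have key : 2 * α * l 1 =
        2 * (q - q⁻¹) ^ 2 * α + (q - q⁻¹) ^ 2 * sconst N q * β := by
      linear_combination 2 * e6 - 2 * (α + sconst N q * β) * h2
        + (2 * q ^ (2 * N + 1) * (q - q⁻¹) * α - 2 * β) * h4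
        - 2 * ((q - q⁻¹) * α + q⁻¹ * β) * h5
        + (q - q⁻¹) ^ 2 * α * hPP - β * (q - q⁻¹) * hss
        + (2 * q ^ (2 * N + 1) * (q - q⁻¹) * α - 2 * β) * ((q - q⁻¹)/2) * hPz
    have h1 : l 1 = (q - q⁻¹) ^ 2 * (2 * α + sconst N q * β) / (2 * α) := by
      apply mul_left_cancel₀ (show (2 : ℂ) * α ≠ 0 from mul_ne_zero two_ne_zero hα)
      linear_combination key - (q - q⁻¹) ^ 2 * (2 * α + sconst N q * β) * hαα
    have key0 : 2 * α * (α + sconst N q * β) * l 0 =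
        α ^ 2 * q ^ (2 * N + 1) * (q - q⁻¹) ^ 3
          + sconst N q * β * α * q ^ (2 * N + 1) * (q - q⁻¹) ^ 3
          - (q - q⁻¹) ^ 2 * β * α - sconst N q * (q - q⁻¹) ^ 2 * β ^ 2 := by
      linear_combination 2 * α * e5 - β * key
        - 2 * α * (q ^ (2 * N + 1) * (q - q⁻¹) ^ 2 * α + q ^ (2 * N) * (q - q⁻¹) * β) * h5
        - α * β * q ^ (2 * N + 1) * (q - q⁻¹) ^ 2 * hss
        - q ^ (2 * N) * (q - q⁻¹) ^ 2 * α * β * hqq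
        + (q - q⁻¹) ^ 2 * α * β * hPP
    have h0 : l 0 = q ^ (2 * N + 1) * (q - q⁻¹) ^ 3 / 2 - (q - q⁻¹) ^ 2 * β / (2 * α) := by
      apply mul_left_cancel₀
        (show (2 : ℂ) * α * (α + sconst N q * β) ≠ 0 from
          mul_ne_zero (mul_ne_zero two_ne_zero hα) hαβ)
      linear_combination key0 + (α + sconst N q * β) * (q - q⁻¹) ^ 2 * β * hαα
    funext i
    fin_cases i
    · simpa using h0
    · simpa using h1
    · simpa using h2
    · simpa using e3
    · simpa using h4
    · simpa using h5
  · rintro rfl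
    refine ⟨?_, ?_, ?_, ?_, ?_, ?_⟩ <;>
      simp only [hPz, Matrix.cons_val_zero, Matrix.cons_val_one, Matrix.head_cons,
        Matrix.cons_val_two, Matrix.tail_cons, Matrix.cons_val_three, Matrix.cons_val_four,
        Matrix.cons_val_succ,
        show (![q ^ (2 * N + 1) * (q - q⁻¹) ^ 3 / 2 - (q - q⁻¹) ^ 2 * β / (2 * α),
            (q - q⁻¹) ^ 2 * (2 * α + sconst N q * β) / (2 * α),
            0, 0, (q ^ (2 * N + 1))⁻¹ * (q - q⁻¹) / 2,
            -(q - q⁻¹) / 2] : Fin 6 → ℂ) 5 = -(q - q⁻¹) / 2 from rfl]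
    · linear_combination ((q - q⁻¹)/2) * hPP
    · ring
    · linear_combination ((q - q⁻¹) ^ 2 * β / 2) * hαα
        + (β * q ^ (2 * N + 1) * (q - q⁻¹) ^ 2 / 2) * hss
        + (q ^ (2 * N) * β * (q - q⁻¹) ^ 2 / 2) * hqq
        - (β * (q - q⁻¹) ^ 2 / 2) * hPP
    · linear_combination ((q - q⁻¹) ^ 2 * (2 * α + sconst N q * β) / 2) * hαα
        - ((q - q⁻¹) ^ 2 * α / 2) * hPP + (β * (q - q⁻¹) / 2) * hss

end Stmt7
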